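/- Every neighborhood of the identity in an ω-balanced topological group G contains a normal admissible subgroup of G. -/

import Mathlib

open Topology TopologicalSpace Pointwise Function Set

/-- A subset N of a topological group is an admissible subgroup if it is the intersection of a
sequence of open symmetric neighborhoods of the identity with Uₙ₊₁·Uₙ₊₁ ⊆ Uₙ. -/
def IsAdmissible {G : Type*} [Group G] [TopologicalSpace G] (N : Set G) : Prop :=
  ∃ U : ℕ → Set G,
    (∀ n, IsOpen (U n) ∧ (1 : G) ∈ U n ∧ (U n)⁻¹ = U n) ∧
    (∀ n, U (n + 1) * U (n + 1) ⊆ U n) ∧ N = ⋂ n, U n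

/-- A (para)topological group is ω-balanced if every neighborhood of the identity admits a
countable subordinated family of open neighborhoods of the identity. -/
def OmegaBalanced (G : Type*) [Group G] [TopologicalSpace G] : Prop :=
  ∀ U ∈ 𝓝 (1 : G), ∃ V : ℕ → Set G,
    (∀ n, IsOpen (V n) ∧ (1 : G) ∈ V n) ∧
      ∀ g : G, ∃ n, (fun x => g * x * g⁻¹) '' V n ⊆ U

set_option maxHeartbeats 1000000 in
/-- Every neighborhood of the identity in an ω-balanced topological group contains a normal
admissible subgroup. -/
theorem statement12 (G : Type*) [Group G] [TopologicalSpace G] [IsTopologicalGroup G]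
    (hb : OmegaBalanced G) :
    ∀ U ∈ 𝓝 (1 : G), ∃ N : Subgroup G, N.Normal ∧ IsAdmissible (N : Set G) ∧
      (N : Set G) ⊆ U := by
  intro U hU
  -- key: every open nbhd of 1 has a good "child family"
  have key : ∀ V : Set G, ∃ c : ℕ → Set G,
      (IsOpen V ∧ (1:G) ∈ V) →
      ((∀ n, (IsOpen (c n) ∧ (1:G) ∈ c n ∧ (c n)⁻¹ = c n) ∧ c n * c n ⊆ V) ∧
        ∀ g : G, ∃ n, (fun x => g * x * g⁻¹) '' c n ⊆ V) := by
    intro V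
    by_cases h : IsOpen V ∧ (1:G) ∈ V
    · obtain ⟨hVo, hV1⟩ := h
      have hVn : V ∈ 𝓝 (1:G) := hVo.mem_nhds hV1
      obtain ⟨V', hV', hconj⟩ := hb V hVn
      obtain ⟨W, hWo, hW1, hWW⟩ := exists_open_nhds_one_mul_subset hVn
      refine ⟨fun n => (W ∩ W⁻¹) ∩ (V' n ∩ (V' n)⁻¹), fun _ =>
        ⟨fun n => ⟨⟨?_, ?_, ?_⟩, ?_⟩, fun g => ?_⟩⟩
      · exact ((hWo.inter hWo.inv).inter ((hV' n).1.inter (hV' n).1.inv))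
      · refine ⟨⟨hW1, ?_⟩, (hV' n).2, ?_⟩ <;> simp [Set.mem_inv, hW1, (hV' n).2]
      · ext x; simp only [Set.mem_inv, Set.mem_inter_iff, inv_inv]; tauto
      · have hsub : (W ∩ W⁻¹) ∩ (V' n ∩ (V' n)⁻¹) ⊆ W :=
          Set.inter_subset_left.trans Set.inter_subset_left
        exact (Set.mul_subset_mul hsub hsub).trans hWW
      · obtain ⟨n, hn⟩ := hconj g
        exact ⟨n, (Set.image_mono
          (Set.inter_subset_right.trans Set.inter_subset_left)).trans hn⟩
    · exact ⟨fun _ => ∅, fun h' => absurd h' h⟩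
  choose c hc using key
  -- base neighborhood
  obtain ⟨V, hVU, hVo, hV1⟩ := mem_nhds_iff.mp hU
  set V0 : Set G := V ∩ V⁻¹ with hV0def
  have hV0o : IsOpen V0 := hVo.inter hVo.inv
  have hV01 : (1:G) ∈ V0 := ⟨hV1, by simpa using hV1⟩
  have hV0s : V0⁻¹ = V0 := by
    ext x; simp only [hV0def, Set.mem_inv, Set.mem_inter_iff, inv_inv]; tauto
  -- tree of neighborhoods
  set Wt : List ℕ → Set G := fun l => l.foldr (fun n S => c S n) V0 with hWtdef
  have hcons : ∀ (n : ℕ) (l : List ℕ), Wt (n :: l) = c (Wt l) n := fun _ _ => rfl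
  have hWprop : ∀ l, IsOpen (Wt l) ∧ (1:G) ∈ Wt l ∧ (Wt l)⁻¹ = Wt l := by
    intro l
    induction l with
    | nil => exact ⟨hV0o, hV01, hV0s⟩
    | cons n l ih =>
        have h := ((hc (Wt l) ⟨ih.1, ih.2.1⟩).1 n).1
        exact ⟨h.1, h.2.1, h.2.2⟩
  have hsq : ∀ l n, Wt (n :: l) * Wt (n :: l) ⊆ Wt l := fun l n =>
    ((hc (Wt l) ⟨(hWprop l).1, (hWprop l).2.1⟩).1 n).2
  have hcj : ∀ (l : List ℕ) (g : G), ∃ n, (fun x => g * x * g⁻¹) '' Wt (n :: l) ⊆ Wt l :=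
    fun l g => (hc (Wt l) ⟨(hWprop l).1, (hWprop l).2.1⟩).2 g
  -- the subgroup
  have hmemsymm : ∀ (l : List ℕ) (x : G), x⁻¹ ∈ Wt l ↔ x ∈ Wt l := by
    intro l x
    conv_lhs => rw [← (hWprop l).2.2]
    exact Set.inv_mem_inv
  let N : Subgroup G :=
    { carrier := ⋂ l : List ℕ, Wt l
      one_mem' := Set.mem_iInter.2 fun l => (hWprop l).2.1
      mul_mem' := by
        intro a b ha hb
        simp only [Set.mem_iInter] at *
        intro l
        exact hsq l 0 (Set.mul_mem_mul (ha (0 :: l)) (hb (0 :: l)))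
      inv_mem' := by
        intro a ha
        simp only [Set.mem_iInter] at *
        intro l
        exact (hmemsymm l a).2 (ha l) }
  have hNmem : ∀ x : G, x ∈ (N : Set G) ↔ ∀ l, x ∈ Wt l := by
    intro x
    change x ∈ ⋂ l : List ℕ, Wt l ↔ _
    exact Set.mem_iInter
  have hNormal : N.Normal := by
    constructor
    intro x hx g
    have hx' : ∀ l, x ∈ Wt l := (hNmem x).1 hx
    refine (hNmem _).2 fun l => ?_
    obtain ⟨n, hn⟩ := hcj l g
    exact hn ⟨x, hx' (n :: l), rfl⟩
  -- enumeration of lists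
  set e : ℕ → List ℕ := fun n => Denumerable.ofNat (List ℕ) n with hedef
  -- finsets
  set S : ℕ → Finset (List ℕ) := fun n =>
    Nat.rec {([] : List ℕ)} (fun m Sm => Sm.image (List.cons 0) ∪ {e m}) n with hSdef
  have hS0 : S 0 = {([] : List ℕ)} := rfl
  have hSsucc : ∀ n, S (n + 1) = (S n).image (List.cons 0) ∪ {e n} := fun n => rfl
  set Useq : ℕ → Set G := fun n => ⋂ l ∈ S n, Wt l with hUseqdef
  have hUmem : ∀ (n : ℕ) (x : G), x ∈ Useq n ↔ ∀ l ∈ S n, x ∈ Wt l := by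
    intro n x; simp [hUseqdef, Set.mem_iInter]
  have hUopen : ∀ n, IsOpen (Useq n) :=
    fun n => isOpen_biInter_finset fun l _ => (hWprop l).1
  have hUone : ∀ n, (1:G) ∈ Useq n :=
    fun n => (hUmem n 1).2 fun l _ => (hWprop l).2.1
  have hUsymm : ∀ n, (Useq n)⁻¹ = Useq n := by
    intro n
    ext x
    rw [Set.mem_inv, hUmem, hUmem]
    exact forall₂_congr fun l _ => hmemsymm l x
  have hchain : ∀ n, Useq (n + 1) * Useq (n + 1) ⊆ Useq n := by
    intro n x hx
    obtain ⟨a, ha, b, hb, rfl⟩ := Set.mem_mul.1 hx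
    refine (hUmem n _).2 fun l hl => ?_
    have h0 : (0 :: l) ∈ S (n + 1) := by
      rw [hSsucc]
      exact Finset.mem_union_left _ (Finset.mem_image_of_mem _ hl)
    exact hsq l 0 (Set.mul_mem_mul ((hUmem (n+1) a).1 ha _ h0) ((hUmem (n+1) b).1 hb _ h0))
  have hNeq : (N : Set G) = ⋂ n, Useq n := by
    ext x
    rw [hNmem, Set.mem_iInter]
    constructor
    · intro h n
      exact (hUmem n x).2 fun l _ => h l
    · intro h l
      have hl : l ∈ S (Encodable.encode l + 1) := by
        rw [hSsucc]
        refine Finset.mem_union_right _ ?_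
        simp [hedef, Denumerable.ofNat_encode]
      have hx : x ∈ Useq (Encodable.encode l + 1) := h (Encodable.encode l + 1)
      have hx2 := (hUmem (Encodable.encode l + 1) x).1 hx
      exact hx2 l hl
  refine ⟨N, hNormal, ⟨Useq, fun n => ⟨hUopen n, hUone n, hUsymm n⟩, hchain, hNeq⟩, ?_⟩
  intro x hx
  have := (hNmem x).1 hx []
  exact hVU this.1
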